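/- (Theorem 2, case ρ1 < M ≤ ρ2.) Assume μ1 = μ2 = 0, let ρ1 = rank(Σ1), ρ2 = rank(Σ2), ρ12 = rank(Σ1 + Σ2), assume ρ1 ≤ ρ2 ≤ ρ12, and assume the rank relations r1 = min(M, ρ1), r2 = min(M, ρ2), r12 = min(M, ρ12). If ρ1 < M ≤ ρ2, then lim_{σ² → 0+} log P̄_err(σ²) / log σ² = (M − ρ1)/4; i.e., the diversity order is d = −(1/2)·((ρ1 − M)/2) = (M − ρ1)/4. -/

import Mathlib

open Matrix MeasureTheory Filter Real Topology

/-- Pseudo-determinant of a real square matrix: the product of the nonzero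
eigenvalues when the matrix is Hermitian (symmetric), with the empty product
equal to 1; junk value 0 otherwise. -/
noncomputable def pdet {n : ℕ} (A : Matrix (Fin n) (Fin n) ℝ) : ℝ :=
  if h : A.IsHermitian then
    ∏ i ∈ Finset.univ.filter (fun i => h.eigenvalues i ≠ 0), h.eigenvalues i
  else 0



lemma det_add_smul_one {n : ℕ} {A : Matrix (Fin n) (Fin n) ℝ} (hA : A.IsHermitian) (s : ℝ) :
    (A + s • (1 : Matrix (Fin n) (Fin n) ℝ)).det = ∏ i, (hA.eigenvalues i + s) := by
  have key : A + s • (1 : Matrix (Fin n) (Fin n) ℝ) =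
      (hA.eigenvectorUnitary : Matrix (Fin n) (Fin n) ℝ) *
        diagonal (fun i => hA.eigenvalues i + s) *
        (star hA.eigenvectorUnitary : Matrix (Fin n) (Fin n) ℝ) := by
    have hU : (hA.eigenvectorUnitary : Matrix (Fin n) (Fin n) ℝ) *
        (star hA.eigenvectorUnitary : Matrix (Fin n) (Fin n) ℝ) = 1 :=
      (Matrix.mem_unitaryGroup_iff).mp hA.eigenvectorUnitary.2
    have hdiag : diagonal (fun i => hA.eigenvalues i + s) =
        diagonal (RCLike.ofReal ∘ hA.eigenvalues) + s • (1 : Matrix (Fin n) (Fin n) ℝ) := by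
      rw [smul_one_eq_diagonal, ← diagonal_add]
      rfl
    rw [hdiag, mul_add, add_mul, mul_smul_comm, smul_mul_assoc, mul_one, hU,
      ← Unitary.conjStarAlgAut_apply (S := ℝ), ← hA.spectral_theorem]
  rw [key, det_mul_right_comm, (Matrix.mem_unitaryGroup_iff).mp hA.eigenvectorUnitary.2,
    one_mul, det_diagonal]

lemma det_add_smul_one_psd {n : ℕ} {A : Matrix (Fin n) (Fin n) ℝ} (hA : A.PosSemidef) (s : ℝ) :
    (A + s • (1 : Matrix (Fin n) (Fin n) ℝ)).det =
      s ^ (n - A.rank) *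
        ∏ i ∈ Finset.univ.filter (fun i => hA.1.eigenvalues i ≠ 0), (hA.1.eigenvalues i + s) := by
  rw [det_add_smul_one hA.1 s,
    ← Finset.prod_filter_mul_prod_filter_not Finset.univ (fun i => hA.1.eigenvalues i ≠ 0)]
  have hcard : (Finset.univ.filter (fun i => ¬ hA.1.eigenvalues i ≠ 0)).card = n - A.rank := by
    have h1 : A.rank = (Finset.univ.filter (fun i => hA.1.eigenvalues i ≠ 0)).card := by
      rw [hA.1.rank_eq_card_non_zero_eigs, Fintype.card_subtype]
    have h2 := Finset.card_filter_add_card_filter_not (s := (Finset.univ : Finset (Fin n)))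
      (p := fun i => hA.1.eigenvalues i ≠ 0)
    simp only [Finset.card_univ, Fintype.card_fin] at h2
    omega
  rw [mul_comm]
  congr 1
  rw [← hcard]
  rw [Finset.prod_congr rfl (fun i hi => ?_), Finset.prod_const]
  simp only [Finset.mem_filter, not_not] at hi
  rw [hi.2, zero_add]

lemma psd_aux {n : ℕ} {A : Matrix (Fin n) (Fin n) ℝ} (hA : A.PosSemidef) :
    ∃ g : ℝ → ℝ, Continuous g ∧ (∀ s, 0 ≤ s → 0 < g s) ∧
      ∀ s, (A + s • (1 : Matrix (Fin n) (Fin n) ℝ)).det = s ^ (n - A.rank) * g s := by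
  refine ⟨fun s => ∏ i ∈ Finset.univ.filter (fun i => hA.1.eigenvalues i ≠ 0),
      (hA.1.eigenvalues i + s), ?_, ?_, fun s => det_add_smul_one_psd hA s⟩
  · exact continuous_finset_prod _ fun i _ => continuous_const.add continuous_id
  · intro s hs
    apply Finset.prod_pos
    intro i hi
    simp only [Finset.mem_filter] at hi
    exact add_pos_of_pos_of_nonneg (lt_of_le_of_ne (hA.eigenvalues_nonneg i) (Ne.symm hi.2)) hs

/-- Bhattacharyya exponent `K(σ²)` for the two-class compressive
classification problem, as a function of the noise level `s = σ²`. -/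
noncomputable def Kb {M N : ℕ} (Φ : Matrix (Fin M) (Fin N) ℝ)
    (S1 S2 : Matrix (Fin N) (Fin N) ℝ) (μ1 μ2 : Fin N → ℝ) (s : ℝ) : ℝ :=
  1/8 * ((Φ *ᵥ (μ1 - μ2)) ⬝ᵥ
      (((1/2 : ℝ) • (Φ * (S1 + S2) * Φᵀ + s • (1 : Matrix (Fin M) (Fin M) ℝ)))⁻¹
        *ᵥ (Φ *ᵥ (μ1 - μ2))))
  + 1/2 * Real.log
      (((1/2 : ℝ) • (Φ * (S1 + S2) * Φᵀ + s • (1 : Matrix (Fin M) (Fin M) ℝ))).det /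
        Real.sqrt ((Φ * S1 * Φᵀ + s • (1 : Matrix (Fin M) (Fin M) ℝ)).det *
          (Φ * S2 * Φᵀ + s • (1 : Matrix (Fin M) (Fin M) ℝ)).det))

/-- Bhattacharyya upper bound `P̄_err(σ²)` to the misclassification probability. -/
noncomputable def Perr {M N : ℕ} (Φ : Matrix (Fin M) (Fin N) ℝ)
    (S1 S2 : Matrix (Fin N) (Fin N) ℝ) (μ1 μ2 : Fin N → ℝ) (P1 P2 : ℝ) (s : ℝ) : ℝ :=
  Real.sqrt (P1 * P2) * Real.exp (-(Kb Φ S1 S2 μ1 μ2 s))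

/-- Theorem 2, case ρ1 < M ≤ ρ2: the diversity order is (M - ρ1)/4. -/
theorem theorem2_case_rho1_lt_M_le_rho2 (M N : ℕ) (hM : 0 < M) (hN : 0 < N)
    (Φ : Matrix (Fin M) (Fin N) ℝ) (S1 S2 : Matrix (Fin N) (Fin N) ℝ)
    (hS1 : S1.PosSemidef) (hS2 : S2.PosSemidef) (μ1 μ2 : Fin N → ℝ)
    (hμ1 : μ1 = 0) (hμ2 : μ2 = 0)
    (P1 P2 : ℝ) (hP1 : 0 < P1) (hP2 : 0 < P2) (hP : P1 + P2 = 1)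
    (hρa : S1.rank ≤ S2.rank) (hρb : S2.rank ≤ (S1 + S2).rank)
    (hr1 : (Φ * S1 * Φᵀ).rank = min M S1.rank)
    (hr2 : (Φ * S2 * Φᵀ).rank = min M S2.rank)
    (hr12 : (Φ * (S1 + S2) * Φᵀ).rank = min M (S1 + S2).rank)
    (hcase1 : S1.rank < M) (hcase2 : M ≤ S2.rank) :
    Filter.Tendsto
      (fun s : ℝ => Real.log (Perr Φ S1 S2 μ1 μ2 P1 P2 s) / Real.log s) (𝓝[>] 0)
      (𝓝 (((M : ℝ) - (S1.rank : ℝ)) / 4)) := by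
  subst hμ1 hμ2
  have hT : ∀ (S : Matrix (Fin N) (Fin N) ℝ), S.PosSemidef → (Φ * S * Φᵀ).PosSemidef := by
    intro S hS
    have := hS.mul_mul_conjTranspose_same Φ
    rwa [conjTranspose_eq_transpose_of_trivial] at this
  have hA1 : (Φ * S1 * Φᵀ).PosSemidef := hT S1 hS1
  have hA2 : (Φ * S2 * Φᵀ).PosSemidef := hT S2 hS2
  have hA12 : (Φ * (S1 + S2) * Φᵀ).PosSemidef := hT _ (hS1.add hS2)
  have rA1 : M - (Φ * S1 * Φᵀ).rank = M - S1.rank := by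
    rw [hr1, min_eq_right hcase1.le]
  have rA2 : M - (Φ * S2 * Φᵀ).rank = 0 := by rw [hr2, min_eq_left hcase2]; omega
  have rA12 : M - (Φ * (S1 + S2) * Φᵀ).rank = 0 := by
    rw [hr12, min_eq_left (hcase2.trans hρb)]; omega
  obtain ⟨g1, hg1c, hg1p, hg1⟩ := psd_aux hA1
  obtain ⟨g2, hg2c, hg2p, hg2⟩ := psd_aux hA2
  obtain ⟨g12, hg12c, hg12p, hg12⟩ := psd_aux hA12
  set k : ℕ := M - S1.rank with hk
  set C : ℝ := Real.log (Real.sqrt (P1 * P2)) with hC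
  set h : ℝ → ℝ := fun s => C - 1/2 * Real.log ((1/2:ℝ)^M * g12 s)
      + 1/4 * Real.log (g1 s) + 1/4 * Real.log (g2 s) with hh
  have hkcast : (k : ℝ) = (M : ℝ) - (S1.rank : ℝ) := by
    rw [hk, Nat.cast_sub hcase1.le]
  have hev : (fun s : ℝ => Real.log (Perr Φ S1 S2 0 0 P1 P2 s) / Real.log s)
      =ᶠ[𝓝[>] (0:ℝ)]
      (fun s => ((M:ℝ) - (S1.rank:ℝ))/4 + h s / Real.log s) := by
    filter_upwards [Ioo_mem_nhdsGT_of_mem (Set.mem_Ico.mpr ⟨le_refl (0:ℝ), zero_lt_one⟩)]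
      with s hs
    obtain ⟨hs0, hs1⟩ := hs
    have hlogs : Real.log s < 0 := Real.log_neg hs0 hs1
    have hg1pos := hg1p s hs0.le
    have hg2pos := hg2p s hs0.le
    have hg12pos := hg12p s hs0.le
    have hd1 : (Φ * S1 * Φᵀ + s • (1:Matrix (Fin M) (Fin M) ℝ)).det = s ^ k * g1 s := by
      rw [hg1 s, rA1]
    have hd2 : (Φ * S2 * Φᵀ + s • (1:Matrix (Fin M) (Fin M) ℝ)).det = g2 s := by
      rw [hg2 s, rA2, pow_zero, one_mul]
    have hd12 : (Φ * (S1+S2) * Φᵀ + s • (1:Matrix (Fin M) (Fin M) ℝ)).det = g12 s := by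
      rw [hg12 s, rA12, pow_zero, one_mul]
    have hKb : Kb Φ S1 S2 0 0 s = 1/2 * Real.log (((1/2:ℝ)^M * g12 s)
        / Real.sqrt ((s ^ k * g1 s) * g2 s)) := by
      rw [Kb, Matrix.det_smul, hd12, hd1, hd2]
      simp [Fintype.card_fin]
    have hlogPerr : Real.log (Perr Φ S1 S2 0 0 P1 P2 s)
        = (k : ℝ)/4 * Real.log s + h s := by
      rw [Perr, Real.log_mul (by positivity) (Real.exp_ne_zero _), Real.log_exp, hKb,
        Real.log_div (by positivity) (by positivity),
        Real.log_sqrt (by positivity : (0:ℝ) ≤ s ^ k * g1 s * g2 s),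
        Real.log_mul (by positivity) (ne_of_gt hg2pos),
        Real.log_mul (by positivity) (ne_of_gt hg1pos),
        Real.log_pow, hh, ← hC]
      ring
    rw [hlogPerr, add_div, mul_div_assoc, div_self (ne_of_lt hlogs), mul_one, hkcast]
  refine Tendsto.congr' hev.symm ?_
  have hstep : Tendsto h (𝓝[>] (0:ℝ)) (𝓝 (h 0)) := by
    have hcont : ContinuousAt h 0 := by
      have l12 : ContinuousAt (fun s => Real.log ((1/2:ℝ)^M * g12 s)) 0 := by
        have hpos : (0:ℝ) < (1/2:ℝ)^M * g12 0 := by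
          have := hg12p 0 le_rfl; positivity
        exact ((continuous_const.mul hg12c).continuousAt).log (ne_of_gt hpos)
      have l1 : ContinuousAt (fun s => Real.log (g1 s)) 0 :=
        hg1c.continuousAt.log (ne_of_gt (hg1p 0 le_rfl))
      have l2 : ContinuousAt (fun s => Real.log (g2 s)) 0 :=
        hg2c.continuousAt.log (ne_of_gt (hg2p 0 le_rfl))
      exact ((continuousAt_const.sub (continuousAt_const.mul l12)).add
        (continuousAt_const.mul l1)).add (continuousAt_const.mul l2)
    exact hcont.continuousWithinAt.tendsto
  have hdiv : Tendsto (fun s => h s / Real.log s) (𝓝[>] (0:ℝ)) (𝓝 0) := by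
    have hneg : Tendsto (fun s : ℝ => -Real.log s) (𝓝[>] (0:ℝ)) atTop :=
      tendsto_neg_atBot_atTop.comp Real.tendsto_log_nhdsGT_zero
    have h0 := (Tendsto.div_atTop hstep hneg).neg
    rw [neg_zero] at h0
    refine h0.congr fun s => ?_
    rw [div_neg, neg_neg]
  have := (tendsto_const_nhds (x := ((M:ℝ) - (S1.rank:ℝ))/4)
    (f := 𝓝[>] (0:ℝ))).add hdiv
  simpa using this
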